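/- With α_r = (1 + a⁴/5)/(2(1−a²)) one has f_d(u, α_r, β₀(α_r)) + f_d(0, α_r, β₀(α_r)) ≥ 0 for all u ∈ [−1,1]. -/

import Mathlib

noncomputable section

open Real Set

/-- A vector in Euclidean 3-space. -/
def v3 (x y z : ℝ) : EuclideanSpace ℝ (Fin 3) := !₂[x, y, z]

/-- Quadratic Bernstein polynomials (parametrized on `[-1,1]`). -/
def bern (i : Fin 3) (u : ℝ) : ℝ :=
  (Nat.choose 2 (i : ℕ)) * ((1 + u) / 2) ^ (i : ℕ) * ((1 - u) / 2) ^ (2 - (i : ℕ))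

/-- Control points `ctrl a α β i j = b i j` of the tensor product quadratic Bézier patch:
`b₀₀ = (-a,-a,√(1-2a²))`, `b₂₀ = (a,-a,√(1-2a²))`, `b₀₂ = (-a,a,√(1-2a²))`,
`b₂₂ = (a,a,√(1-2a²))`, `b₁₀ = α(b₀₀+b₂₀)`, `b₀₁ = α(b₀₀+b₀₂)`, `b₂₁ = α(b₂₀+b₂₂)`,
`b₁₂ = α(b₀₂+b₂₂)`, `b₁₁ = β(0,0,1)`. The first index is the `u`-index. -/
def ctrl (a α β : ℝ) : Fin 3 → Fin 3 → EuclideanSpace ℝ (Fin 3) :=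
  ![![v3 (-a) (-a) (Real.sqrt (1 - 2*a^2)),
     α • (v3 (-a) (-a) (Real.sqrt (1 - 2*a^2)) + v3 (-a) a (Real.sqrt (1 - 2*a^2))),
     v3 (-a) a (Real.sqrt (1 - 2*a^2))],
    ![α • (v3 (-a) (-a) (Real.sqrt (1 - 2*a^2)) + v3 a (-a) (Real.sqrt (1 - 2*a^2))),
     β • v3 0 0 1,
     α • (v3 (-a) a (Real.sqrt (1 - 2*a^2)) + v3 a a (Real.sqrt (1 - 2*a^2)))],
    ![v3 a (-a) (Real.sqrt (1 - 2*a^2)),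
     α • (v3 a (-a) (Real.sqrt (1 - 2*a^2)) + v3 a a (Real.sqrt (1 - 2*a^2))),
     v3 a a (Real.sqrt (1 - 2*a^2))]]

/-- The tensor product quadratic Bézier patch
`p(u,v) = ∑ᵢ ∑ⱼ Bᵢ²(u) Bⱼ²(v) bᵢⱼ`. -/
def bez (a α β u v : ℝ) : EuclideanSpace ℝ (Fin 3) :=
  ∑ i : Fin 3, ∑ j : Fin 3, (bern i u * bern j v) • ctrl a α β i j

/-- The simplified radial error `f(u,v,α,β) = ‖p(u,v)‖² - 1`. -/
def f (a α β u v : ℝ) : ℝ := ‖bez a α β u v‖ ^ 2 - 1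

/-- `f_s(u,α) = f(u,-1,α,β)`; this does not depend on `β` (the control point `b₁₁`
does not contribute on the side `v = -1`), so we take `β = 0`. -/
def fs (a α u : ℝ) : ℝ := f a α 0 u (-1)

/-- `f_d(u,α,β) = f(u,u,α,β)`, the error along the diagonal. -/
def fd (a α β u : ℝ) : ℝ := f a α β u u

/-- `β₀(α) = 2(1+2α)√(1-a²) - (1+4α)√(1-2a²)`. -/
def β₀ (a α : ℝ) : ℝ := 2*(1 + 2*α)*Real.sqrt (1 - a^2) - (1 + 4*α)*Real.sqrt (1 - 2*a^2)


lemma norm_sq_eq (x : EuclideanSpace ℝ (Fin 3)) : ‖x‖^2 = x 0^2 + x 1^2 + x 2^2 := by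
  rw [EuclideanSpace.norm_eq, Real.sq_sqrt (by positivity)]
  simp [Fin.sum_univ_three, sq_abs]

lemma bez_apply (a α β u v : ℝ) (k : Fin 3) :
    bez a α β u v k = ∑ i : Fin 3, ∑ j : Fin 3, (bern i u * bern j v) * ctrl a α β i j k := by
  simp [bez]

lemma fd_eval (a α β u : ℝ) :
    fd a α β u = 2*(a*u*((1+u^2)/2 + α*(1-u^2)))^2
      + (Real.sqrt (1-2*a^2) * (((1+u^2)/2)^2 + 4*α*((1+u^2)/2)*((1-u^2)/2))
         + β*((1-u^2)/2)^2)^2 - 1 := by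
  unfold fd f
  rw [norm_sq_eq]
  simp only [bez_apply, Fin.sum_univ_three, ctrl, bern, v3]
  norm_num [Matrix.cons_val_zero, Matrix.cons_val_one, Matrix.head_cons, Matrix.cons_val_two, Matrix.tail_cons]
  ring

set_option maxHeartbeats 1000000 in
lemma Upos (b w : ℝ) (hb0 : 0 ≤ b) (hb : b ≤ 1/2) (hw0 : 0 ≤ w) (hw : w ≤ 1) :
    0 ≤ (72/5) + (-64)*w^1 + (704/5)*w^2 + (-112)*w^3 + (28)*w^4 + (-88/5)*b^1 + (64)*b^1*w^1 + (-672/5)*b^1*w^2 + (496/5)*b^1*w^3 + (-20)*b^1*w^4 + (88/25)*b^2 + (-144/5)*b^2*w^1 + (1632/25)*b^2*w^2 + (-224/5)*b^2*w^3 + (164/25)*b^2*w^4 + (-8/25)*b^3 + (32/5)*b^3*w^1 + (-16)*b^3*w^2 + (336/25)*b^3*w^3 + (-92/25)*b^3*w^4 + (-16/25)*b^4*w^1 + (48/25)*b^4*w^2 + (-48/25)*b^4*w^3 + (16/25)*b^4*w^4 := by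
  have hb2 : (0:ℝ) ≤ 1/2 - b := by linarith
  rcases le_or_gt w (1/2) with hc | hc
  · have h1 : (0:ℝ) ≤ 1/2 - w := by linarith
    linarith [mul_nonneg (mul_nonneg (mul_nonneg (pow_nonneg hb0 0) (pow_nonneg hb2 4)) (pow_nonneg hw0 0)) (pow_nonneg h1 4), mul_nonneg (mul_nonneg (mul_nonneg (pow_nonneg hb0 0) (pow_nonneg hb2 4)) (pow_nonneg hw0 1)) (pow_nonneg h1 3), mul_nonneg (mul_nonneg (mul_nonneg (pow_nonneg hb0 0) (pow_nonneg hb2 4)) (pow_nonneg hw0 2)) (pow_nonneg h1 2), mul_nonneg (mul_nonneg (mul_nonneg (pow_nonneg hb0 0) (pow_nonneg hb2 4)) (pow_nonneg hw0 3)) (pow_nonneg h1 1), mul_nonneg (mul_nonneg (mul_nonneg (pow_nonneg hb0 0) (pow_nonneg hb2 4)) (pow_nonneg hw0 4)) (pow_nonneg h1 0), mul_nonneg (mul_nonneg (mul_nonneg (pow_nonneg hb0 1) (pow_nonneg hb2 3)) (pow_nonneg hw0 0)) (pow_nonneg h1 4), mul_nonneg (mul_nonneg (mul_nonneg (pow_nonneg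 hb0 1) (pow_nonneg hb2 3)) (pow_nonneg hw0 1)) (pow_nonneg h1 3), mul_nonneg (mul_nonneg (mul_nonneg (pow_nonneg hb0 1) (pow_nonneg hb2 3)) (pow_nonneg hw0 2)) (pow_nonneg h1 2), mul_nonneg (mul_nonneg (mul_nonneg (pow_nonneg hb0 1) (pow_nonneg hb2 3)) (pow_nonneg hw0 3)) (pow_nonneg h1 1), mul_nonneg (mul_nonneg (mul_nonneg (pow_nonneg hb0 1) (pow_nonneg hb2 3)) (pow_nonneg hw0 4)) (pow_nonneg h1 0), mul_nonneg (mul_nonneg (mul_nonneg (pow_nonneg hb0 2) (pow_nonneg hb2 2)) (pow_nonneg hw0 0)) (pow_nonneg h1 4), mul_nonneg (mul_nonneg (mul_nonneg (pow_nonneg hb0 2) (pow_nonneg hb2 2)) (pow_nonneg hw0 1)) (pow_nonneg h1 3), mul_nonneg (mul_nonneg (mul_nonneg (pow_nonneg hb0 2) (pow_nonneg hb2 2)) (pow_nonneg hw0 2)) (pow_nonneg h1 2), mul_nonneg (mul_nonneg (mul_nonneg (pow_nonneg hb0 2) (pow_nonneg hb2 2)) (pow_nonneg hw0 3)) (pow_nonneg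 h1 1), mul_nonneg (mul_nonneg (mul_nonneg (pow_nonneg hb0 2) (pow_nonneg hb2 2)) (pow_nonneg hw0 4)) (pow_nonneg h1 0), mul_nonneg (mul_nonneg (mul_nonneg (pow_nonneg hb0 3) (pow_nonneg hb2 1)) (pow_nonneg hw0 0)) (pow_nonneg h1 4), mul_nonneg (mul_nonneg (mul_nonneg (pow_nonneg hb0 3) (pow_nonneg hb2 1)) (pow_nonneg hw0 1)) (pow_nonneg h1 3), mul_nonneg (mul_nonneg (mul_nonneg (pow_nonneg hb0 3) (pow_nonneg hb2 1)) (pow_nonneg hw0 2)) (pow_nonneg h1 2), mul_nonneg (mul_nonneg (mul_nonneg (pow_nonneg hb0 3) (pow_nonneg hb2 1)) (pow_nonneg hw0 3)) (pow_nonneg h1 1), mul_nonneg (mul_nonneg (mul_nonneg (pow_nonneg hb0 3) (pow_nonneg hb2 1)) (pow_nonneg hw0 4)) (pow_nonneg h1 0), mul_nonneg (mul_nonneg (mul_nonneg (pow_nonneg hb0 4) (pow_nonneg hb2 0)) (pow_nonneg hw0 0)) (pow_nonneg h1 4), mul_nonneg (mul_nonneg (mul_nonneg (pow_nonneg hb0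 4) (pow_nonneg hb2 0)) (pow_nonneg hw0 1)) (pow_nonneg h1 3), mul_nonneg (mul_nonneg (mul_nonneg (pow_nonneg hb0 4) (pow_nonneg hb2 0)) (pow_nonneg hw0 2)) (pow_nonneg h1 2), mul_nonneg (mul_nonneg (mul_nonneg (pow_nonneg hb0 4) (pow_nonneg hb2 0)) (pow_nonneg hw0 3)) (pow_nonneg h1 1), mul_nonneg (mul_nonneg (mul_nonneg (pow_nonneg hb0 4) (pow_nonneg hb2 0)) (pow_nonneg hw0 4)) (pow_nonneg h1 0)]
  · have h1 : (0:ℝ) ≤ w - 1/2 := by linarith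
    have h2 : (0:ℝ) ≤ 1 - w := by linarith
    linarith [mul_nonneg (mul_nonneg (mul_nonneg (pow_nonneg hb0 0) (pow_nonneg hb2 4)) (pow_nonneg h1 0)) (pow_nonneg h2 4), mul_nonneg (mul_nonneg (mul_nonneg (pow_nonneg hb0 0) (pow_nonneg hb2 4)) (pow_nonneg h1 1)) (pow_nonneg h2 3), mul_nonneg (mul_nonneg (mul_nonneg (pow_nonneg hb0 0) (pow_nonneg hb2 4)) (pow_nonneg h1 2)) (pow_nonneg h2 2), mul_nonneg (mul_nonneg (mul_nonneg (pow_nonneg hb0 0) (pow_nonneg hb2 4)) (pow_nonneg h1 3)) (pow_nonneg h2 1), mul_nonneg (mul_nonneg (mul_nonneg (pow_nonneg hb0 0) (pow_nonneg hb2 4)) (pow_nonneg h1 4)) (pow_nonneg h2 0), mul_nonneg (mul_nonneg (mul_nonneg (pow_nonneg hb0 1) (pow_nonneg hb2 3)) (pow_nonneg h1 0)) (pow_nonneg h2 4), mul_nonneg (mul_nonneg (mul_nonneg (pow_nonneg hb0 1) (pow_nonneg hb2 3)) (pow_nonneg h1 1)) (pow_nonneg h2 3), mul_nonneg (mul_nonneg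 (mul_nonneg (pow_nonneg hb0 1) (pow_nonneg hb2 3)) (pow_nonneg h1 2)) (pow_nonneg h2 2), mul_nonneg (mul_nonneg (mul_nonneg (pow_nonneg hb0 1) (pow_nonneg hb2 3)) (pow_nonneg h1 3)) (pow_nonneg h2 1), mul_nonneg (mul_nonneg (mul_nonneg (pow_nonneg hb0 1) (pow_nonneg hb2 3)) (pow_nonneg h1 4)) (pow_nonneg h2 0), mul_nonneg (mul_nonneg (mul_nonneg (pow_nonneg hb0 2) (pow_nonneg hb2 2)) (pow_nonneg h1 0)) (pow_nonneg h2 4), mul_nonneg (mul_nonneg (mul_nonneg (pow_nonneg hb0 2) (pow_nonneg hb2 2)) (pow_nonneg h1 1)) (pow_nonneg h2 3), mul_nonneg (mul_nonneg (mul_nonneg (pow_nonneg hb0 2) (pow_nonneg hb2 2)) (pow_nonneg h1 2)) (pow_nonneg h2 2), mul_nonneg (mul_nonneg (mul_nonneg (pow_nonneg hb0 2) (pow_nonneg hb2 2)) (pow_nonneg h1 3)) (pow_nonneg h2 1), mul_nonneg (mul_nonneg (mul_nonneg (pow_nonneg hb0 2) (pow_nonneg hb2 2)) (pow_nonneg h1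 4)) (pow_nonneg h2 0), mul_nonneg (mul_nonneg (mul_nonneg (pow_nonneg hb0 3) (pow_nonneg hb2 1)) (pow_nonneg h1 0)) (pow_nonneg h2 4), mul_nonneg (mul_nonneg (mul_nonneg (pow_nonneg hb0 3) (pow_nonneg hb2 1)) (pow_nonneg h1 1)) (pow_nonneg h2 3), mul_nonneg (mul_nonneg (mul_nonneg (pow_nonneg hb0 3) (pow_nonneg hb2 1)) (pow_nonneg h1 2)) (pow_nonneg h2 2), mul_nonneg (mul_nonneg (mul_nonneg (pow_nonneg hb0 3) (pow_nonneg hb2 1)) (pow_nonneg h1 3)) (pow_nonneg h2 1), mul_nonneg (mul_nonneg (mul_nonneg (pow_nonneg hb0 3) (pow_nonneg hb2 1)) (pow_nonneg h1 4)) (pow_nonneg h2 0), mul_nonneg (mul_nonneg (mul_nonneg (pow_nonneg hb0 4) (pow_nonneg hb2 0)) (pow_nonneg h1 0)) (pow_nonneg h2 4), mul_nonneg (mul_nonneg (mul_nonneg (pow_nonneg hb0 4) (pow_nonneg hb2 0)) (pow_nonneg h1 1)) (pow_nonneg h2 3), mul_nonneg (mul_nonneg (mul_nonneg (pow_nonneg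 hb0 4) (pow_nonneg hb2 0)) (pow_nonneg h1 2)) (pow_nonneg h2 2), mul_nonneg (mul_nonneg (mul_nonneg (pow_nonneg hb0 4) (pow_nonneg hb2 0)) (pow_nonneg h1 3)) (pow_nonneg h2 1), mul_nonneg (mul_nonneg (mul_nonneg (pow_nonneg hb0 4) (pow_nonneg hb2 0)) (pow_nonneg h1 4)) (pow_nonneg h2 0)]

set_option maxHeartbeats 4000000 in
lemma hAB_lemma (a u s t : ℝ) (hb : a^2 ≤ 1/2) (hu : u^2 ≤ 1)
    (hst : 1 - 3/2*a^2 - a^4 ≤ s*t) :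
    (0:ℝ) ≤ ((-64)*u^2 + (160)*u^4 + (-128)*u^6 + (32)*u^8 + (160)*a^2*u^2 + (-384)*a^2*u^4 + (288)*a^2*u^6 + (-64)*a^2*u^8 + (72/5)*a^4 + (-624/5)*a^4*u^2 + (264)*a^4*u^4 + (-176)*a^4*u^6 + (148/5)*a^4*u^8 + (-88/5)*a^6 + (248/5)*a^6*u^2 + (-536/5)*a^6*u^4 + (88)*a^6*u^6 + (-108/5)*a^6*u^8 + (88/25)*a^8 + (-256/25)*a^8*u^2 + (24)*a^8*u^4 + (-448/25)*a^8*u^6 + (12/5)*a^8*u^8 + (-8/25)*a^10 + (24/25)*a^10*u^2 + (-72/25)*a^10*u^4 + (88/25)*a^10*u^6 + (-36/25)*a^10*u^8) + ((64)*u^2 + (-160)*u^4 + (128)*u^6 + (-32)*u^8 + (-64)*a^2*u^2 + (144)*a^2*u^4 + (-96)*a^2*u^6 + (16)*a^2*u^8 + (144/5)*a^4*u^2 + (-336/5)*a^4*u^4 + (48)*a^4*u^6 + (-48/5)*a^4*u^8 + (-32/5)*a^6*u^2 + (16)*a^6*u^4 + (-64/5)*a^6*u^6 + (16/5)*a^6*u^8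 + (16/25)*a^8*u^2 + (-48/25)*a^8*u^4 + (48/25)*a^8*u^6 + (-16/25)*a^8*u^8)*(s*t) := by
  have hw0 : (0:ℝ) ≤ u^2 := sq_nonneg u
  have ha2 : (0:ℝ) ≤ a^2 := sq_nonneg a
  have hU := Upos (a^2) (u^2) ha2 hb hw0 hu
  have hB : (0:ℝ) ≤ (64)*u^2 + (-160)*u^4 + (128)*u^6 + (-32)*u^8 + (-64)*a^2*u^2 + (144)*a^2*u^4 + (-96)*a^2*u^6 + (16)*a^2*u^8 + (144/5)*a^4*u^2 + (-336/5)*a^4*u^4 + (48)*a^4*u^6 + (-48/5)*a^4*u^8 + (-32/5)*a^6*u^2 + (16)*a^6*u^4 + (-64/5)*a^6*u^6 + (16/5)*a^6*u^8 + (16/25)*a^8*u^2 + (-48/25)*a^8*u^4 + (48/25)*a^8*u^6 + (-16/25)*a^8*u^8 := by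
    have hfac : ((64)*u^2 + (-160)*u^4 + (128)*u^6 + (-32)*u^8 + (-64)*a^2*u^2 + (144)*a^2*u^4 + (-96)*a^2*u^6 + (16)*a^2*u^8 + (144/5)*a^4*u^2 + (-336/5)*a^4*u^4 + (48)*a^4*u^6 + (-48/5)*a^4*u^8 + (-32/5)*a^6*u^2 + (16)*a^6*u^4 + (-64/5)*a^6*u^6 + (16/5)*a^6*u^8 + (16/25)*a^8*u^2 + (-48/25)*a^8*u^4 + (48/25)*a^8*u^6 + (-16/25)*a^8*u^8) =
        16*u^2*((2-2*a^2)+4*(1+a^4/5)*((1-u^2)/2))*((2-2*a^2)+2*(1+a^4/5))*((1-u^2)/2)^2 := by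
      ring
    rw [hfac]
    have h1 : (0:ℝ) ≤ (2-2*a^2)+4*(1+a^4/5)*((1-u^2)/2) := by nlinarith
    have h2 : (0:ℝ) ≤ (2-2*a^2)+2*(1+a^4/5) := by nlinarith
    have h3 : (0:ℝ) ≤ ((1-u^2)/2)^2 := sq_nonneg _
    have h4 : (0:ℝ) ≤ 16*u^2 := by positivity
    exact mul_nonneg (mul_nonneg (mul_nonneg h4 h1) h2) h3
  have hL0 : (0:ℝ) ≤ ((-64)*u^2 + (160)*u^4 + (-128)*u^6 + (32)*u^8 + (160)*a^2*u^2 + (-384)*a^2*u^4 + (288)*a^2*u^6 + (-64)*a^2*u^8 + (72/5)*a^4 + (-624/5)*a^4*u^2 + (264)*a^4*u^4 + (-176)*a^4*u^6 + (148/5)*a^4*u^8 + (-88/5)*a^6 + (248/5)*a^6*u^2 + (-536/5)*a^6*u^4 + (88)*a^6*u^6 + (-108/5)*a^6*u^8 + (88/25)*a^8 + (-256/25)*a^8*u^2 + (24)*a^8*u^4 + (-448/25)*a^8*u^6 + (12/5)*a^8*u^8 + (-8/25)*a^10 + (24/25)*a^10*u^2 + (-72/25)*a^10*u^4 + (88/25)*a^10*u^6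 + (-36/25)*a^10*u^8) + ((64)*u^2 + (-160)*u^4 + (128)*u^6 + (-32)*u^8 + (-64)*a^2*u^2 + (144)*a^2*u^4 + (-96)*a^2*u^6 + (16)*a^2*u^8 + (144/5)*a^4*u^2 + (-336/5)*a^4*u^4 + (48)*a^4*u^6 + (-48/5)*a^4*u^8 + (-32/5)*a^6*u^2 + (16)*a^6*u^4 + (-64/5)*a^6*u^6 + (16/5)*a^6*u^8 + (16/25)*a^8*u^2 + (-48/25)*a^8*u^4 + (48/25)*a^8*u^6 + (-16/25)*a^8*u^8)*(1 - 3/2*a^2 - a^4) := by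
    have hid : ((-64)*u^2 + (160)*u^4 + (-128)*u^6 + (32)*u^8 + (160)*a^2*u^2 + (-384)*a^2*u^4 + (288)*a^2*u^6 + (-64)*a^2*u^8 + (72/5)*a^4 + (-624/5)*a^4*u^2 + (264)*a^4*u^4 + (-176)*a^4*u^6 + (148/5)*a^4*u^8 + (-88/5)*a^6 + (248/5)*a^6*u^2 + (-536/5)*a^6*u^4 + (88)*a^6*u^6 + (-108/5)*a^6*u^8 + (88/25)*a^8 + (-256/25)*a^8*u^2 + (24)*a^8*u^4 + (-448/25)*a^8*u^6 + (12/5)*a^8*u^8 + (-8/25)*a^10 + (24/25)*a^10*u^2 + (-72/25)*a^10*u^4 + (88/25)*a^10*u^6 + (-36/25)*a^10*u^8) + ((64)*u^2 + (-160)*u^4 + (128)*u^6 + (-32)*u^8 + (-64)*a^2*u^2 + (144)*a^2*u^4 + (-96)*a^2*u^6 + (16)*a^2*u^8 + (144/5)*a^4*u^2 + (-336/5)*a^4*u^4 + (48)*a^4*u^6 + (-48/5)*a^4*u^8 + (-32/5)*a^6*u^2 + (16)*a^6*u^4 + (-64/5)*a^6*u^6 + (16/5)*a^6*u^8 + (16/25)*a^8*u^2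 + (-48/25)*a^8*u^4 + (48/25)*a^8*u^6 + (-16/25)*a^8*u^8)*(1 - 3/2*a^2 - a^4)
        = a^4 * ((72/5) + (-64)*(u^2)^1 + (704/5)*(u^2)^2 + (-112)*(u^2)^3 + (28)*(u^2)^4 + (-88/5)*(a^2)^1 + (64)*(a^2)^1*(u^2)^1 + (-672/5)*(a^2)^1*(u^2)^2 + (496/5)*(a^2)^1*(u^2)^3 + (-20)*(a^2)^1*(u^2)^4 + (88/25)*(a^2)^2 + (-144/5)*(a^2)^2*(u^2)^1 + (1632/25)*(a^2)^2*(u^2)^2 + (-224/5)*(a^2)^2*(u^2)^3 + (164/25)*(a^2)^2*(u^2)^4 + (-8/25)*(a^2)^3 + (32/5)*(a^2)^3*(u^2)^1 + (-16)*(a^2)^3*(u^2)^2 + (336/25)*(a^2)^3*(u^2)^3 + (-92/25)*(a^2)^3*(u^2)^4 + (-16/25)*(a^2)^4*(u^2)^1 + (48/25)*(a^2)^4*(u^2)^2 + (-48/25)*(a^2)^4*(u^2)^3 + (16/25)*(a^2)^4*(u^2)^4) := by ring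
    rw [hid]
    exact mul_nonneg (by positivity) hU
  nlinarith [mul_le_mul_of_nonneg_left hst hB]


set_option maxHeartbeats 4000000 in
lemma hE_lemma (a u s t α : ℝ) (hs2 : s^2 = 1 - 2*a^2) (ht2 : t^2 = 1 - a^2)
    (hα : 2*(1-a^2)*α = 1 + a^4/5) :
    (4*(1-a^2)^2) * (16*(1-a^2)^2 * ((2*(a*u*((1+u^2)/2 + α*(1-u^2)))^2
      + (s * (((1+u^2)/2)^2 + 4*α*((1+u^2)/2)*((1-u^2)/2))
         + (2*(1 + 2*α)*t - (1 + 4*α)*s)*((1-u^2)/2)^2)^2 - 1)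
    + (2*(a*0*((1+0^2)/2 + α*(1-0^2)))^2
      + (s * (((1+0^2)/2)^2 + 4*α*((1+0^2)/2)*((1-0^2)/2))
         + (2*(1 + 2*α)*t - (1 + 4*α)*s)*((1-0^2)/2)^2)^2 - 1)))
      = (4*(1-a^2)^2) * (((-64)*u^2 + (160)*u^4 + (-128)*u^6 + (32)*u^8 + (160)*a^2*u^2 + (-384)*a^2*u^4 + (288)*a^2*u^6 + (-64)*a^2*u^8 + (72/5)*a^4 + (-624/5)*a^4*u^2 + (264)*a^4*u^4 + (-176)*a^4*u^6 + (148/5)*a^4*u^8 + (-88/5)*a^6 + (248/5)*a^6*u^2 + (-536/5)*a^6*u^4 + (88)*a^6*u^6 + (-108/5)*a^6*u^8 + (88/25)*a^8 + (-256/25)*a^8*u^2 + (24)*a^8*u^4 + (-448/25)*a^8*u^6 + (12/5)*a^8*u^8 + (-8/25)*a^10 + (24/25)*a^10*u^2 + (-72/25)*a^10*u^4 + (88/25)*a^10*u^6 + (-36/25)*a^10*u^8) + ((64)*u^2 + (-160)*u^4 + (128)*u^6 + (-32)*u^8 + (-64)*a^2*u^2 + (144)*a^2*u^4 + (-96)*a^2*u^6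 + (16)*a^2*u^8 + (144/5)*a^4*u^2 + (-336/5)*a^4*u^4 + (48)*a^4*u^6 + (-48/5)*a^4*u^8 + (-32/5)*a^6*u^2 + (16)*a^6*u^4 + (-64/5)*a^6*u^6 + (16/5)*a^6*u^8 + (16/25)*a^8*u^2 + (-48/25)*a^8*u^4 + (48/25)*a^8*u^6 + (-16/25)*a^8*u^8)*(s*t)) := by
  linear_combination ((96)*t^2 + (64)*t^2*α^1 + (-192)*u^2*t^2 + (-128)*u^2*t^2*α^1 + (192)*u^2*s^1*t^1 + (128)*u^2*s^1*t^1*α^1 + (288)*u^4*t^2 + (192)*u^4*t^2*α^1 + (-512)*u^4*s^1*t^1 + (-384)*u^4*s^1*t^1*α^1 + (192)*u^4*s^2 + (128)*u^4*s^2*α^1 + (-192)*u^6*t^2 + (-128)*u^6*t^2*α^1 + (448)*u^6*s^1*t^1 + (384)*u^6*s^1*t^1*α^1 + (-256)*u^6*s^2 + (-256)*u^6*s^2*α^1 + (48)*u^8*t^2 + (32)*u^8*t^2*α^1 + (-128)*u^8*s^1*t^1 + (-128)*u^8*s^1*t^1*α^1 + (64)*u^8*s^2 + (128)*u^8*s^2*α^1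 + (-256)*a^2*t^2 + (-192)*a^2*t^2*α^1 + (96)*a^2*u^2 + (64)*a^2*u^2*α^1 + (512)*a^2*u^2*t^2 + (384)*a^2*u^2*t^2*α^1 + (-512)*a^2*u^2*s^1*t^1 + (-384)*a^2*u^2*s^1*t^1*α^1 + (-64)*a^2*u^4 + (-128)*a^2*u^4*α^1 + (-768)*a^2*u^4*t^2 + (-576)*a^2*u^4*t^2*α^1 + (1344)*a^2*u^4*s^1*t^1 + (1152)*a^2*u^4*s^1*t^1*α^1 + (-512)*a^2*u^4*s^2 + (-384)*a^2*u^4*s^2*α^1 + (-32)*a^2*u^6 + (64)*a^2*u^6*α^1 + (512)*a^2*u^6*t^2 + (384)*a^2*u^6*t^2*α^1 + (-1152)*a^2*u^6*s^1*t^1 + (-1152)*a^2*u^6*s^1*t^1*α^1 + (640)*a^2*u^6*s^2 + (768)*a^2*u^6*s^2*α^1 + (-128)*a^2*u^8*t^2 + (-96)*a^2*u^8*t^2*α^1 + (320)*a^2*u^8*s^1*t^1 + (384)*a^2*u^8*s^1*t^1*α^1 + (-128)*a^2*u^8*s^2 + (-384)*a^2*u^8*s^2*α^1 + (1152/5)*a^4*t^2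 + (192)*a^4*t^2*α^1 + (-256)*a^4*u^2 + (-192)*a^4*u^2*α^1 + (-2304/5)*a^4*u^2*t^2 + (-384)*a^4*u^2*t^2*α^1 + (2304/5)*a^4*u^2*s^1*t^1 + (384)*a^4*u^2*s^1*t^1*α^1 + (128)*a^4*u^4 + (384)*a^4*u^4*α^1 + (3456/5)*a^4*u^4*t^2 + (576)*a^4*u^4*t^2*α^1 + (-5952/5)*a^4*u^4*s^1*t^1 + (-1152)*a^4*u^4*s^1*t^1*α^1 + (2304/5)*a^4*u^4*s^2 + (384)*a^4*u^4*s^2*α^1 + (128)*a^4*u^6 + (-192)*a^4*u^6*α^1 + (-2304/5)*a^4*u^6*t^2 + (-384)*a^4*u^6*t^2*α^1 + (4992/5)*a^4*u^6*s^1*t^1 + (1152)*a^4*u^6*s^1*t^1*α^1 + (-2688/5)*a^4*u^6*s^2 + (-768)*a^4*u^6*s^2*α^1 + (576/5)*a^4*u^8*t^2 + (96)*a^4*u^8*t^2*α^1 + (-1344/5)*a^4*u^8*s^1*t^1 + (-384)*a^4*u^8*s^1*t^1*α^1 + (384/5)*a^4*u^8*s^2 + (384)*a^4*u^8*s^2*α^1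 + (-384/5)*a^6*t^2 + (-64)*a^6*t^2*α^1 + (1152/5)*a^6*u^2 + (192)*a^6*u^2*α^1 + (768/5)*a^6*u^2*t^2 + (128)*a^6*u^2*t^2*α^1 + (-768/5)*a^6*u^2*s^1*t^1 + (-128)*a^6*u^2*s^1*t^1*α^1 + (-384/5)*a^6*u^4 + (-384)*a^6*u^4*α^1 + (-1152/5)*a^6*u^4*t^2 + (-192)*a^6*u^4*t^2*α^1 + (1984/5)*a^6*u^4*s^1*t^1 + (384)*a^6*u^4*s^1*t^1*α^1 + (-768/5)*a^6*u^4*s^2 + (-128)*a^6*u^4*s^2*α^1 + (-768/5)*a^6*u^6 + (192)*a^6*u^6*α^1 + (768/5)*a^6*u^6*t^2 + (128)*a^6*u^6*t^2*α^1 + (-1664/5)*a^6*u^6*s^1*t^1 + (-384)*a^6*u^6*s^1*t^1*α^1 + (896/5)*a^6*u^6*s^2 + (256)*a^6*u^6*s^2*α^1 + (-192/5)*a^6*u^8*t^2 + (-32)*a^6*u^8*t^2*α^1 + (448/5)*a^6*u^8*s^1*t^1 + (128)*a^6*u^8*s^1*t^1*α^1 + (-128/5)*a^6*u^8*s^2 +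 (-128)*a^6*u^8*s^2*α^1 + (32/5)*a^8*t^2 + (-384/5)*a^8*u^2 + (-64)*a^8*u^2*α^1 + (-64/5)*a^8*u^2*t^2 + (64/5)*a^8*u^2*s^1*t^1 + (128/5)*a^8*u^4 + (128)*a^8*u^4*α^1 + (96/5)*a^8*u^4*t^2 + (-192/5)*a^8*u^4*s^1*t^1 + (64/5)*a^8*u^4*s^2 + (256/5)*a^8*u^6 + (-64)*a^8*u^6*α^1 + (-64/5)*a^8*u^6*t^2 + (192/5)*a^8*u^6*s^1*t^1 + (-128/5)*a^8*u^6*s^2 + (16/5)*a^8*u^8*t^2 + (-64/5)*a^8*u^8*s^1*t^1 + (64/5)*a^8*u^8*s^2 + (32/5)*a^10*u^2 + (-64/5)*a^10*u^4 + (32/5)*a^10*u^6) * hα + ((256)*u^4 + (-256)*u^6 + (64)*u^8 + (-768)*a^2*u^4 + (640)*a^2*u^6 + (-128)*a^2*u^8 + (4416/5)*a^4*u^4 + (-2944/5)*a^4*u^6 + (448/5)*a^4*u^8 + (-512)*a^6*u^4 + (1536/5)*a^6*u^6 + (-256/5)*a^6*u^8 + (4224/25)*a^8*u^4 + (-3328/25)*a^8*u^6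 + (704/25)*a^8*u^8 + (-768/25)*a^10*u^4 + (896/25)*a^10*u^6 + (-128/25)*a^10*u^8 + (64/25)*a^12*u^4 + (-128/25)*a^12*u^6 + (64/25)*a^12*u^8) * hs2 + ((128) + (-256)*u^2 + (384)*u^4 + (-256)*u^6 + (64)*u^8 + (-384)*a^2 + (768)*a^2*u^2 + (-1152)*a^2*u^4 + (768)*a^2*u^6 + (-192)*a^2*u^8 + (2208/5)*a^4 + (-4416/5)*a^4*u^2 + (6624/5)*a^4*u^4 + (-4416/5)*a^4*u^6 + (1104/5)*a^4*u^8 + (-256)*a^6 + (512)*a^6*u^2 + (-768)*a^6*u^4 + (512)*a^6*u^6 + (-128)*a^6*u^8 + (2112/25)*a^8 + (-4224/25)*a^8*u^2 + (6336/25)*a^8*u^4 + (-4224/25)*a^8*u^6 + (1056/25)*a^8*u^8 + (-384/25)*a^10 + (768/25)*a^10*u^2 + (-1152/25)*a^10*u^4 + (768/25)*a^10*u^6 + (-192/25)*a^10*u^8 + (32/25)*a^12 + (-64/25)*a^12*u^2 + (96/25)*a^12*u^4 + (-64/25)*a^12*u^6 + (16/25)*a^12*u^8) * ht2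


lemma key (a u s t α : ℝ) (hb : a^2 ≤ 1/2) (hu : u^2 ≤ 1)
    (hs : 0 ≤ s) (ht : 0 ≤ t) (hs2 : s^2 = 1 - 2*a^2) (ht2 : t^2 = 1 - a^2)
    (hst : 1 - 3/2*a^2 - a^4 ≤ s*t) (hα : 2*(1-a^2)*α = 1 + a^4/5) :
    0 ≤ (2*(a*u*((1+u^2)/2 + α*(1-u^2)))^2
      + (s * (((1+u^2)/2)^2 + 4*α*((1+u^2)/2)*((1-u^2)/2))
         + (2*(1 + 2*α)*t - (1 + 4*α)*s)*((1-u^2)/2)^2)^2 - 1)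
    + (2*(a*0*((1+0^2)/2 + α*(1-0^2)))^2
      + (s * (((1+0^2)/2)^2 + 4*α*((1+0^2)/2)*((1-0^2)/2))
         + (2*(1 + 2*α)*t - (1 + 4*α)*s)*((1-0^2)/2)^2)^2 - 1) := by
  have hp1 : (0:ℝ) < 4*(1-a^2)^2 := by nlinarith
  have hp2 : (0:ℝ) < 16*(1-a^2)^2 := by nlinarith
  have h1 : (0:ℝ) ≤ (4*(1-a^2)^2) * (16*(1-a^2)^2 * ((2*(a*u*((1+u^2)/2 + α*(1-u^2)))^2
      + (s * (((1+u^2)/2)^2 + 4*α*((1+u^2)/2)*((1-u^2)/2))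
         + (2*(1 + 2*α)*t - (1 + 4*α)*s)*((1-u^2)/2)^2)^2 - 1)
    + (2*(a*0*((1+0^2)/2 + α*(1-0^2)))^2
      + (s * (((1+0^2)/2)^2 + 4*α*((1+0^2)/2)*((1-0^2)/2))
         + (2*(1 + 2*α)*t - (1 + 4*α)*s)*((1-0^2)/2)^2)^2 - 1))) := by
    rw [hE_lemma a u s t α hs2 ht2 hα]
    exact mul_nonneg hp1.le (hAB_lemma a u s t hb hu hst)
  exact (mul_nonneg_iff_of_pos_left hp2).mp ((mul_nonneg_iff_of_pos_left hp1).mp h1)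

/-- With `α_r = (1 + a⁴/5)/(2(1-a²))` one has
`f_d(u, α_r, β₀(α_r)) + f_d(0, α_r, β₀(α_r)) ≥ 0` for all `u ∈ [-1,1]`. -/

theorem fd_alpha_r (a : ℝ) (ha : 0 < a) (ha' : a ≤ Real.sqrt 2 / 2) :
    ∀ u ∈ Set.Icc (-1:ℝ) 1,
      0 ≤ fd a ((1 + a^4/5) / (2*(1 - a^2))) (β₀ a ((1 + a^4/5) / (2*(1 - a^2)))) u +
          fd a ((1 + a^4/5) / (2*(1 - a^2))) (β₀ a ((1 + a^4/5) / (2*(1 - a^2)))) 0 := by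
  intro u hu
  have hsq2 : (Real.sqrt 2 / 2)^2 = 1/2 := by
    rw [div_pow, Real.sq_sqrt] <;> norm_num
  have hb : a^2 ≤ 1/2 := by
    rw [← hsq2]
    exact pow_le_pow_left₀ ha.le ha' 2
  have h2a : (0:ℝ) ≤ 1 - 2*a^2 := by linarith
  have h1a : (0:ℝ) ≤ 1 - a^2 := by linarith
  have hpos : (0:ℝ) < 1 - a^2 := by nlinarith
  have hu2 : u^2 ≤ 1 := by
    obtain ⟨h1, h2⟩ := hu
    nlinarith
  have hs2 : (Real.sqrt (1 - 2*a^2))^2 = 1 - 2*a^2 := Real.sq_sqrt h2a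
  have ht2 : (Real.sqrt (1 - a^2))^2 = 1 - a^2 := Real.sq_sqrt h1a
  have hst : 1 - 3/2*a^2 - a^4 ≤ Real.sqrt (1 - 2*a^2) * Real.sqrt (1 - a^2) := by
    have h0 : (0:ℝ) ≤ 1 - 3/2*a^2 - a^4 := by nlinarith
    have hq : (0:ℝ) ≤ 7/4 - 3*a^2 - a^4 := by
      nlinarith [mul_nonneg (sq_nonneg a) (sub_nonneg.2 hb)]
    have h1 : (1 - 3/2*a^2 - a^4)^2 ≤ (1 - 2*a^2) * (1 - a^2) := by
      nlinarith [mul_nonneg (mul_nonneg (sq_nonneg a) (sq_nonneg a)) hq]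
    calc 1 - 3/2*a^2 - a^4 = Real.sqrt ((1 - 3/2*a^2 - a^4)^2) := (Real.sqrt_sq h0).symm
      _ ≤ Real.sqrt ((1 - 2*a^2) * (1 - a^2)) := Real.sqrt_le_sqrt h1
      _ = Real.sqrt (1 - 2*a^2) * Real.sqrt (1 - a^2) := Real.sqrt_mul h2a _
  have hα : 2*(1-a^2)*((1 + a^4/5) / (2*(1 - a^2))) = 1 + a^4/5 :=
    mul_div_cancel₀ _ (by nlinarith)
  rw [fd_eval, fd_eval]
  simp only [β₀]
  exact key a u (Real.sqrt (1 - 2*a^2)) (Real.sqrt (1 - a^2)) ((1 + a^4/5) / (2*(1 - a^2)))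
    hb hu2 (Real.sqrt_nonneg _) (Real.sqrt_nonneg _) hs2 ht2 hst hα

end
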